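/- arXiv:1308.1415 — 9 statements merged into one kernel-verified Lean document; each statement's English description precedes it below -/
import Mathlib

section
/- The subspace L²₀(F) is invariant under π, and the restriction π₀ of π to L²₀(F) is irreducible: for every g ∈ G one has π(g)(L²₀(F)) ⊆ L²₀(F), and every ℂ-linear subspace W ⊆ L²₀(F) satisfying π(g)W ⊆ W for all g ∈ G is either {0} or all of L²₀(F). -/
/-- `L²₀(F)`: the subspace of functions `F → ℂ` whose values sum to zero. -/
noncomputable def L20 (F : Type*) [Field F] [Fintype F] : Submodule ℂ (F → ℂ) where
  carrier := {f | ∑ x, f x = 0}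
  add_mem' := by
    intro f g hf hg
    simp only [Set.mem_setOf_eq, Pi.add_apply, Finset.sum_add_distrib] at *
    rw [hf, hg, add_zero]
  zero_mem' := by simp
  smul_mem' := by
    intro c f hf
    simp only [Set.mem_setOf_eq, Pi.smul_apply, smul_eq_mul, ← Finset.mul_sum] at *
    rw [hf, mul_zero]

/-- The affine bijection `x ↦ (x-b)/a` of `F`. -/
def affEquivAux {F : Type*} [Field F] (a : Fˣ) (b : F) : F ≃ F where
  toFun x := (x - b) / (a : F)
  invFun y := (a : F) * y + b
  left_inv x := by field_simp; ring
  right_inv y := by field_simp; ring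

lemma sum_units_aux {F : Type*} [Field F] [Fintype F] [DecidableEq F] (g : F → ℂ)
    (hg : ∑ x, g x = 0) : ∑ a : Fˣ, g (a : F) = - g 0 := by
  have h1 : ∑ a : Fˣ, g (a : F) = ∑ y ∈ Finset.univ.erase (0:F), g y := by
    refine Finset.sum_nbij' (fun a => (a : F))
      (fun y => if h : y = (0:F) then 1 else Units.mk0 y h) ?_ ?_ ?_ ?_ ?_
    · intro a _; exact Finset.mem_erase.2 ⟨a.ne_zero, Finset.mem_univ _⟩
    · intro y hy; exact Finset.mem_univ _
    · intro a _; simp [a.ne_zero, Units.ext_iff]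
    · intro y hy; simp [Finset.ne_of_mem_erase hy]
    · intro a _; rfl
  have h2 := Finset.add_sum_erase Finset.univ g (Finset.mem_univ (0:F))
  rw [hg] at h2
  rw [h1]; linear_combination h2

/-- `q·δ_b − 𝟙` as a function. -/
noncomputable def hFun (F : Type*) [Field F] [Fintype F] [DecidableEq F] (b : F) : F → ℂ :=
  fun x => if x = b then (Fintype.card F : ℂ) - 1 else -1

/-- `δ_b − δ_{b'}` as a function. -/
noncomputable def dFun (F : Type*) [Field F] [Fintype F] [DecidableEq F] (b b' : F) : F → ℂ :=
  fun x => (if x = b then (1:ℂ) else 0) - (if x = b' then (1:ℂ) else 0)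

lemma d_eq_h {F : Type*} [Field F] [Fintype F] [DecidableEq F] (b b' : F) :
    dFun F b b' = (Fintype.card F : ℂ)⁻¹ • (hFun F b - hFun F b') := by
  have qne : (Fintype.card F : ℂ) ≠ 0 := Nat.cast_ne_zero.2 Fintype.card_pos.ne'
  funext x
  simp only [dFun, hFun, Pi.smul_apply, Pi.sub_apply, smul_eq_mul]
  by_cases hb : x = b <;> by_cases hb' : x = b'
  · have hbb : b = b' := hb ▸ hb'
    simp [hb, hb', hbb]
  · have hbb : ¬ b = b' := fun e => hb' (hb.trans e)
    simp only [if_pos hb, if_neg hb', if_neg hbb]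
    field_simp
    ring
  · have hbb : ¬ b' = b := fun e => hb (hb'.trans e)
    simp only [if_neg hb, if_pos hb', if_neg hbb]
    field_simp
    ring
  · simp [hb, hb']

lemma key_avg {F : Type*} [Field F] [Fintype F] [DecidableEq F] (f : F → ℂ)
    (hf : ∑ x, f x = 0) (c : F) :
    (∑ a : Fˣ, fun x => f (x / (a:F) + c)) = (f c) • hFun F 0 := by
  funext x
  simp only [Finset.sum_apply, Pi.smul_apply, smul_eq_mul, hFun]
  by_cases hx : x = (0:F)
  · subst hx
    simp only [zero_div, zero_add, Finset.sum_const, Finset.card_univ, Fintype.card_units,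
      nsmul_eq_mul, if_pos rfl]
    rw [Nat.cast_sub Fintype.card_pos]
    push_cast
    ring
  · have hG : ∑ y, f (y + c) = 0 := (Equiv.sum_comp (Equiv.addRight c) f).trans hf
    have h1 : ∑ a : Fˣ, f (x / (a:F) + c) = ∑ a : Fˣ, f ((a:F) + c) := by
      rw [← Equiv.sum_comp ((Equiv.inv Fˣ).trans (Equiv.mulLeft (Units.mk0 x hx)))
        (fun a : Fˣ => f ((a:F) + c))]
      refine Finset.sum_congr rfl fun a _ => ?_
      simp [div_eq_mul_inv, Units.val_mul, Units.val_inv_eq_inv_val]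
    rw [h1, sum_units_aux (fun y => f (y + c)) hG]
    simp [hx]

/-- The subspace `L²₀(F)` is invariant under the representation
`(π(a,b)f)(x) = f((x-b)/a)` of the affine group of `F`, and the restriction of `π`
to `L²₀(F)` is irreducible. -/
theorem statement_0 {F : Type*} [Field F] [Fintype F] :
    (∀ (a : Fˣ) (b : F), ∀ f ∈ L20 F, (fun x => f ((x - b) / (a : F))) ∈ L20 F) ∧
    (∀ W : Submodule ℂ (F → ℂ), W ≤ L20 F →
      (∀ (a : Fˣ) (b : F), ∀ f ∈ W, (fun x => f ((x - b) / (a : F))) ∈ W) →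
      W = ⊥ ∨ W = L20 F) := by
  classical
  constructor
  · intro a b f hf
    have : ∑ x, f ((x - b) / (a : F)) = ∑ x, f x := Equiv.sum_comp (affEquivAux a b) f
    simpa [L20, this] using hf
  · intro W hWle hWinv
    by_cases hW : W = ⊥
    · exact Or.inl hW
    right
    obtain ⟨f, hfW, hf0⟩ := Submodule.exists_mem_ne_zero_of_ne_bot hW
    obtain ⟨c, hc⟩ : ∃ c, f c ≠ 0 := by
      by_contra h; push_neg at h; exact hf0 (funext h)
    have hfL : ∑ x, f x = 0 := hWle hfW
    -- the translate g(x) = f(x+c) lies in W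
    have hgW : (fun x => f (x + c)) ∈ W := by
      have h1 := hWinv 1 (-c) f hfW
      simpa [sub_neg_eq_add] using h1
    -- each dilate of g lies in W
    have htermW : ∀ a : Fˣ, (fun x => f (x / (a:F) + c)) ∈ W := by
      intro a
      have h1 := hWinv a 0 _ hgW
      simpa using h1
    -- the averaged function q·δ₀ − 𝟙 lies in W
    have hsW : (∑ a : Fˣ, fun x => f (x / (a:F) + c)) ∈ W :=
      Submodule.sum_mem W fun a _ => htermW a
    rw [key_avg f hfL c] at hsW
    have hhW : hFun F 0 ∈ W := by
      have : hFun F 0 = (f c)⁻¹ • ((f c) • hFun F 0) := by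
        rw [smul_smul, inv_mul_cancel₀ hc, one_smul]
      rw [this]
      exact Submodule.smul_mem W _ hsW
    -- all translates q·δ_b − 𝟙 lie in W
    have hbW : ∀ b : F, hFun F b ∈ W := by
      intro b
      have h1 := hWinv 1 b _ hhW
      have h2 : (fun x => hFun F 0 ((x - b) / ((1:Fˣ):F))) = hFun F b := by
        funext x
        simp [hFun, sub_eq_zero]
      rwa [h2] at h1
    -- all δ_b − δ_{b'} lie in W
    have hdW : ∀ b b' : F, dFun F b b' ∈ W := by
      intro b b'
      rw [d_eq_h]
      exact Submodule.smul_mem W _ (Submodule.sub_mem W (hbW b) (hbW b'))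
    -- these span L²₀
    apply le_antisymm hWle
    intro g hg
    have hgsum : ∑ x, g x = 0 := hg
    have hrep : g = ∑ x : F, g x • dFun F x 0 := by
      funext y
      simp only [Finset.sum_apply, Pi.smul_apply, smul_eq_mul, dFun]
      by_cases hy : y = (0:F)
      · subst hy
        simp only [mul_sub]
        rw [Finset.sum_sub_distrib]
        simp [Finset.sum_ite_eq', hgsum]
      · simp only [mul_sub]
        rw [Finset.sum_sub_distrib]
        simp [Finset.sum_ite_eq', hy]
    rw [hrep]
    exact Submodule.sum_mem W fun x _ => Submodule.smul_mem W _ (hdW x 0)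
end

section
/- Let k be an integer with ζ^k ≠ 1. If φ ∈ L²(F) satisfies π((u,0))φ = ζ^k·φ (that is, φ(u^{−1}x) = ζ^k φ(x) for all x ∈ F), then φ is a complex scalar multiple of φ_{k,0}. -/
open Complex

/-- If `ζ^k ≠ 1` and `φ ∈ L²(F)` satisfies `π((u,0))φ = ζ^k φ`, i.e.
`φ(u⁻¹x) = ζ^k φ(x)` for all `x`, then `φ` is a scalar multiple of `φ_{k,0}`,
the function with `φ_{k,0}(0) = 0` and `φ_{k,0}(u^j) = ζ^{-kj}/√(q-1)`. -/
theorem statement_3 {F : Type*} [Field F] [Fintype F]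
    (u : Fˣ) (hu : ∀ x : Fˣ, x ∈ Subgroup.zpowers u)
    (ζ : ℂ) (hζ : ζ = Complex.exp (2 * Real.pi * Complex.I / ((Fintype.card F : ℂ) - 1)))
    (k : ℤ) (hk : ζ ^ k ≠ 1)
    (φk0 : F → ℂ) (hφk0zero : φk0 0 = 0)
    (hφk0 : ∀ j : ℕ, φk0 ((u : F) ^ j) =
      ζ ^ (-(k * (j : ℤ))) / (Real.sqrt ((Fintype.card F : ℝ) - 1) : ℂ))
    (φ : F → ℂ) (hφ : ∀ x : F, φ (((u : F))⁻¹ * x) = ζ ^ k * φ x) :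
    ∃ z : ℂ, φ = z • φk0 := by
  have hζ0 : ζ ≠ 0 := by rw [hζ]; exact Complex.exp_ne_zero _
  have hu0 : (u : F) ≠ 0 := Units.ne_zero u
  have hφ0 : φ 0 = 0 := by
    have h := hφ 0
    rw [mul_zero] at h
    by_contra h0
    exact hk ((mul_left_eq_self₀.mp h.symm).resolve_right h0)
  have key : ∀ j : ℕ, φ ((u : F) ^ j) = ζ ^ (-(k * (j : ℤ))) * φ 1 := by
    intro j
    induction j with
    | zero => simp
    | succ n ih =>
      have h := hφ ((u : F) ^ (n + 1))
      have h1 : ((u : F))⁻¹ * (u : F) ^ (n + 1) = (u : F) ^ n := by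
        rw [pow_succ']
        field_simp
      rw [h1, ih] at h
      have hzk : ζ ^ k ≠ 0 := zpow_ne_zero _ hζ0
      have : φ ((u : F) ^ (n + 1)) = (ζ ^ k)⁻¹ * (ζ ^ (-(k * (n : ℤ))) * φ 1) := by
        rw [h]; field_simp
      rw [this, ← zpow_neg]
      push_cast
      rw [← mul_assoc, ← zpow_add₀ hζ0]
      ring_nf
  refine ⟨φ 1 * (Real.sqrt ((Fintype.card F : ℝ) - 1) : ℂ), ?_⟩
  have hcard : (1 : ℝ) < Fintype.card F := by exact_mod_cast Fintype.one_lt_card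
  have hsqrt : (Real.sqrt ((Fintype.card F : ℝ) - 1) : ℂ) ≠ 0 := by
    have : (0:ℝ) < Real.sqrt ((Fintype.card F : ℝ) - 1) := Real.sqrt_pos.mpr (by linarith)
    exact_mod_cast this.ne'
  funext x
  by_cases hx : x = 0
  · simp [hx, hφ0, hφk0zero]
  · obtain ⟨j, hj⟩ := mem_powers_iff_mem_zpowers.mpr (hu (Units.mk0 x hx))
    have hj' : (u : F) ^ j = x := by
      have := congrArg (Units.val) hj
      simpa using this
    rw [← hj', Pi.smul_apply, key j, hφk0 j, smul_eq_mul]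
    field_simp
end

section
/- Assume q > 2 and let b ∈ F and c = (u,b) ∈ G. Then ψ_{b/(1−u)} ∈ L²₀(F) and π(c)·ψ_{b/(1−u)} = ψ_{b/(1−u)}; moreover, if φ ∈ L²₀(F) satisfies π(c)φ = φ, then φ = z·ψ_{b/(1−u)} for some z ∈ ℂ. -/
/-- `φ_{0,0}`: the function with `φ_{0,0}(0) = 0` and `φ_{0,0}(u^j) = 1/√(q-1)` for
`u^j ∈ F^×` (i.e. on every nonzero element). -/
noncomputable def phi00 (F : Type*) [Field F] [Fintype F] [DecidableEq F] : F → ℂ :=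
  fun x => if x = 0 then 0 else 1 / (Real.sqrt ((Fintype.card F : ℝ) - 1) : ℂ)

/-- `ψ_0 = (φ_{0,0} - √(q-1)·δ_0)/√q`. -/
noncomputable def psi0 (F : Type*) [Field F] [Fintype F] [DecidableEq F] : F → ℂ :=
  fun x => (phi00 F x - (Real.sqrt ((Fintype.card F : ℝ) - 1) : ℂ) *
      (if x = 0 then 1 else 0)) / (Real.sqrt (Fintype.card F) : ℂ)

/-- `ψ_v(x) = ψ_0(x - v)`. -/
noncomputable def psi (F : Type*) [Field F] [Fintype F] [DecidableEq F] (v : F) : F → ℂ :=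
  fun x => psi0 F (x - v)

/-- For `c = (u,b)`, the state `ψ_{b/(1-u)}` lies in `L²₀(F)` and is fixed by `π(c)`;
moreover every `π(c)`-fixed vector in `L²₀(F)` is a scalar multiple of `ψ_{b/(1-u)}`. -/
theorem statement_4 {F : Type*} [Field F] [Fintype F] [DecidableEq F]
    (hq : 2 < Fintype.card F)
    (u : Fˣ) (hu : ∀ x : Fˣ, x ∈ Subgroup.zpowers u) (b : F) :
    psi F (b / (1 - (u : F))) ∈ L20 F ∧
    (∀ x : F, psi F (b / (1 - (u : F))) ((x - b) / (u : F)) = psi F (b / (1 - (u : F))) x) ∧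
    (∀ φ : F → ℂ, φ ∈ L20 F → (∀ x : F, φ ((x - b) / (u : F)) = φ x) →
      ∃ z : ℂ, φ = z • psi F (b / (1 - (u : F)))) := by
  have hune : (u:F) ≠ 1 := by
    intro h
    have hu' : u = 1 := Units.ext h
    have hcard : 1 < Fintype.card Fˣ := by rw [Fintype.card_units]; omega
    obtain ⟨y, hy⟩ := Fintype.exists_ne_of_one_lt_card hcard 1
    obtain ⟨n, hn⟩ := hu y
    rw [hu'] at hn
    simp at hn
    exact hy hn.symm
  have h1u : (1:F) - (u:F) ≠ 0 := sub_ne_zero.mpr hune.symm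
  have hu0 : (u:F) ≠ 0 := Units.ne_zero u
  set v : F := b / (1 - (u:F)) with hv
  have hvb : (u:F) * v + b = v := by
    have h : v * (1 - (u:F)) = b := div_mul_cancel₀ _ h1u
    linear_combination -h
  set A : ℂ := (Real.sqrt ((Fintype.card F : ℝ) - 1) : ℂ) with hA
  set B : ℂ := (Real.sqrt (Fintype.card F) : ℂ) with hB
  have hq1 : (1:ℝ) ≤ (Fintype.card F : ℝ) - 1 := by
    have : (3:ℝ) ≤ Fintype.card F := by exact_mod_cast hq
    linarith
  have hA2 : A * A = ((Fintype.card F : ℂ) - 1) := by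
    rw [hA]
    rw [← Complex.ofReal_mul, Real.mul_self_sqrt (by linarith)]
    push_cast
    ring
  have hAne : A ≠ 0 := by
    rw [hA]
    simp only [ne_eq, Complex.ofReal_eq_zero]
    positivity
  have hBne : B ≠ 0 := by
    rw [hB]
    simp only [ne_eq, Complex.ofReal_eq_zero]
    have : (0:ℝ) < Fintype.card F := by positivity
    positivity
  have hpsi : ∀ x : F, psi F v x = if x = v then -A / B else 1 / (A * B) := by
    intro x
    simp only [psi, psi0, phi00, sub_eq_zero]
    by_cases hx : x = v <;> simp [hx] <;> ring
  -- Part 1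
  have part1 : psi F v ∈ L20 F := by
    show ∑ x, psi F v x = 0
    have hrw : ∀ x : F, psi F v x = 1/(A*B) + (if x = v then -A/B - 1/(A*B) else 0) := by
      intro x
      rw [hpsi x]
      by_cases hx : x = v <;> simp [hx]
    simp only [hrw]
    rw [Finset.sum_add_distrib, Finset.sum_const, Finset.sum_ite_eq' Finset.univ v]
    simp only [Finset.mem_univ, if_true, Finset.card_univ, nsmul_eq_mul]
    field_simp
    linear_combination -hA2
  -- Part 2
  have part2 : ∀ x : F, psi F v ((x - b) / (u:F)) = psi F v x := by
    intro x
    rw [hpsi, hpsi]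
    have hiff : (x - b) / (u:F) = v ↔ x = v := by
      rw [div_eq_iff hu0]
      constructor
      · intro h; linear_combination h + hvb
      · intro h; rw [h]; linear_combination -hvb
    by_cases hx : x = v
    · rw [if_pos (hiff.mpr hx), if_pos hx]
    · rw [if_neg (fun h => hx (hiff.mp h)), if_neg hx]
  -- Part 3
  have part3 : ∀ φ : F → ℂ, φ ∈ L20 F → (∀ x : F, φ ((x - b) / (u:F)) = φ x) →
      ∃ z : ℂ, φ = z • psi F v := by
    intro φ hφ hfix
    have hsum : ∑ x, φ x = 0 := hφ
    have hstep : ∀ w : F, φ (v + w / (u:F)) = φ (v + w) := by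
      intro w
      have h := hfix (v + w)
      have harg : (v + w - b) / (u:F) = v + w / (u:F) := by
        field_simp
        linear_combination -hvb
      rwa [harg] at h
    have hpow : ∀ (n : ℕ) (w : F), φ (v + w / (u:F)^n) = φ (v + w) := by
      intro n
      induction n with
      | zero => intro w; simp
      | succ n ih =>
        intro w
        have : w / (u:F)^(n+1) = (w / (u:F)^n) / (u:F) := by
          rw [div_div, pow_succ]
        rw [this, hstep, ih]
    have hconst : ∀ x : F, x ≠ v → φ x = φ (v + 1) := by
      intro x hx
      have hxv : x - v ≠ 0 := sub_ne_zero.mpr hx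
      obtain ⟨m, hm⟩ := (mem_powers_iff_mem_zpowers).mpr (hu (Units.mk0 (x - v) hxv))
      have hm' : (u:F)^m = x - v := by
        have := congrArg (Units.val) hm
        simpa using this
      have h1 : (1:F) = (x - v) / (u:F)^m := by
        rw [← hm']
        field_simp
      calc φ x = φ (v + (x - v)) := by ring_nf
        _ = φ (v + (x - v) / (u:F)^m) := (hpow m (x - v)).symm
        _ = φ (v + 1) := by rw [← h1]
    set c0 : ℂ := φ (v + 1) with hc0
    have hval_v : φ v = -((Fintype.card F : ℂ) - 1) * c0 := by
      have hrw : ∀ x : F, φ x = c0 + (if x = v then φ v - c0 else 0) := by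
        intro x
        by_cases hx : x = v
        · simp [hx]
        · simp [hx, hconst x hx]
      rw [Finset.sum_congr rfl (fun x _ => hrw x), Finset.sum_add_distrib,
        Finset.sum_const, Finset.sum_ite_eq' Finset.univ v] at hsum
      simp only [Finset.mem_univ, if_true, Finset.card_univ, nsmul_eq_mul] at hsum
      linear_combination hsum
    refine ⟨c0 * (A * B), ?_⟩
    funext x
    simp only [Pi.smul_apply, smul_eq_mul, hpsi x]
    by_cases hx : x = v
    · rw [hx, if_pos rfl, hval_v]
      field_simp
      linear_combination c0 * hA2
    · rw [if_neg hx, hconst x hx]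
      field_simp
  exact ⟨part1, part2, part3⟩
end

section
/- Assume q > 2, let b ∈ F, c = (u,b) ∈ G, and let k be an integer with ζ^k ≠ 1. Then φ_{k,b/(1−u)} ∈ L²₀(F) and π(c)·φ_{k,b/(1−u)} = ζ^k·φ_{k,b/(1−u)}; moreover, if φ ∈ L²₀(F) satisfies π(c)φ = ζ^k·φ, then φ = z·φ_{k,b/(1−u)} for some z ∈ ℂ. -/
/-- For `c = (u,b)` and `ζ^k ≠ 1`, the wavelet `φ_{k,b/(1-u)}` lies in `L²₀(F)` and is an
eigenvector of `π(c)` with eigenvalue `ζ^k`; moreover every `ζ^k`-eigenvector of `π(c)` in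
`L²₀(F)` is a scalar multiple of `φ_{k,b/(1-u)}`.  Here `φ_{k,0}` is the function with
`φ_{k,0}(0) = 0` and `φ_{k,0}(u^j) = ζ^{-kj}/√(q-1)`, and `φ_{k,v}(x) = φ_{k,0}(x-v)`. -/
theorem statement_5 {F : Type*} [Field F] [Fintype F] [DecidableEq F]
    (hq : 2 < Fintype.card F)
    (u : Fˣ) (hu : ∀ x : Fˣ, x ∈ Subgroup.zpowers u)
    (ζ : ℂ) (hζ : ζ = Complex.exp (2 * Real.pi * Complex.I / ((Fintype.card F : ℂ) - 1)))
    (k : ℤ) (hk : ζ ^ k ≠ 1)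
    (φk0 : F → ℂ) (hφk0zero : φk0 0 = 0)
    (hφk0 : ∀ j : ℕ, φk0 ((u : F) ^ j) =
      ζ ^ (-(k * (j : ℤ))) / (Real.sqrt ((Fintype.card F : ℝ) - 1) : ℂ))
    (b : F) :
    (fun x => φk0 (x - b / (1 - (u : F)))) ∈ L20 F ∧
    (∀ x : F, φk0 ((x - b) / (u : F) - b / (1 - (u : F))) =
      ζ ^ k * φk0 (x - b / (1 - (u : F)))) ∧
    (∀ φ : F → ℂ, φ ∈ L20 F → (∀ x : F, φ ((x - b) / (u : F)) = ζ ^ k * φ x) →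
      ∃ z : ℂ, φ = z • fun x => φk0 (x - b / (1 - (u : F)))) := by
  set n := Fintype.card F with hn
  set m := n - 1 with hm
  have hm2 : 2 ≤ m := by omega
  have hnm : n = m + 1 := by omega
  have hζ0 : ζ ≠ 0 := by rw [hζ]; exact Complex.exp_ne_zero _
  have hmc : ((m : ℕ) : ℂ) = (n : ℂ) - 1 := by rw [hnm]; push_cast; ring
  have hm0 : ((m : ℕ) : ℂ) ≠ 0 := Nat.cast_ne_zero.mpr (by omega)
  have hζm : ζ ^ m = 1 := by
    rw [hζ, ← Complex.exp_nat_mul, ← hmc, mul_div_assoc', mul_div_cancel_left₀ _ hm0,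
      Complex.exp_two_pi_mul_I]
  have hζm1 : ζ ^ (m : ℤ) = 1 := by rw [zpow_natCast, hζm]
  have hu0 : (u : F) ≠ 0 := Units.ne_zero u
  have hcardu : Fintype.card Fˣ = m := by rw [Fintype.card_units]
  have hu1 : (u : F) ≠ 1 := by
    intro h
    have hu' : u = 1 := Units.ext h
    obtain ⟨x, hx⟩ := Fintype.exists_ne_of_one_lt_card (by omega : 1 < Fintype.card Fˣ) 1
    obtain ⟨j, hj⟩ := hu x
    rw [hu'] at hj
    simp at hj
    exact hx hj.symm
  have h1u : (1 : F) - u ≠ 0 := sub_ne_zero.mpr (Ne.symm hu1)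
  have hum : (u : F) ^ m = 1 := by
    have : u ^ Fintype.card Fˣ = 1 := pow_card_eq_one
    rw [hcardu] at this
    simpa using congrArg Units.val this
  have hpow : ∀ y : F, y ≠ 0 → ∃ j : ℕ, y = (u : F) ^ j := by
    intro y hy
    obtain ⟨j, hj⟩ := (mem_powers_iff_mem_zpowers).mpr (hu (Units.mk0 y hy))
    refine ⟨j, ?_⟩
    have h := congrArg Units.val hj
    simpa using h.symm
  -- the key step identity
  have step : ∀ y : F, φk0 (y / u) = ζ ^ k * φk0 y := by
    intro y
    by_cases hy : y = 0
    · simp [hy, hφk0zero]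
    · obtain ⟨j, rfl⟩ := hpow y hy
      have hdiv : (u : F) ^ j / u = (u : F) ^ (j + m - 1) := by
        rw [div_eq_iff hu0, ← pow_succ, show j + m - 1 + 1 = j + m by omega, pow_add, hum,
          mul_one]
      rw [hdiv, hφk0, hφk0]
      have hj : ((j + m - 1 : ℕ) : ℤ) = (j : ℤ) + m - 1 := by omega
      rw [hj, show -(k * ((j : ℤ) + (m : ℤ) - 1)) = k + -(k * (j : ℤ)) + (m : ℤ) * (-k) by ring,
        zpow_add₀ hζ0, zpow_add₀ hζ0, zpow_mul, hζm1, one_zpow, mul_one]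
      ring
  have hS : ∑ x, φk0 x = 0 := by
    have h1 : ∑ x : F, φk0 (x / (u : F)) = ∑ x, φk0 x := by
      apply Fintype.sum_equiv (Equiv.mulRight₀ (u : F)⁻¹ (inv_ne_zero hu0))
      intro x
      simp [Equiv.mulRight₀, div_eq_mul_inv]
    have h2 : ∑ x : F, φk0 (x / (u : F)) = ζ ^ k * ∑ x, φk0 x := by
      rw [Finset.mul_sum]
      exact Finset.sum_congr rfl fun x _ => step x
    have h3 : (1 - ζ ^ k) * ∑ x, φk0 x = 0 := by
      rw [sub_mul, one_mul, sub_eq_zero]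
      exact h1.symm.trans h2
    rcases mul_eq_zero.mp h3 with h | h
    · exact absurd (sub_eq_zero.mp h).symm hk
    · exact h
  refine ⟨?_, ?_, ?_⟩
  · show ∑ x : F, φk0 (x - b / (1 - (u : F))) = 0
    have he : ∑ x : F, φk0 (x - b / (1 - (u : F))) = ∑ x : F, φk0 x :=
      Fintype.sum_equiv (Equiv.subRight (b / (1 - (u : F)))) _ φk0 (fun x => rfl)
    rw [he]
    exact hS
  · intro x
    have harg : (x - b) / (u : F) - b / (1 - (u : F)) =
        (x - b / (1 - (u : F))) / (u : F) := by
      field_simp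
      ring
    rw [harg]
    exact step _
  · intro φ _ hφ
    set v : F := b / (1 - (u : F)) with hv
    have hrel : ∀ y : F, φ (y / u + v) = ζ ^ k * φ (y + v) := by
      intro y
      have h := hφ (y + v)
      have harg : (y + v - b) / (u : F) = y / u + v := by
        rw [hv]; field_simp; ring
      rwa [harg] at h
    have hv0 : φ v = 0 := by
      have h := hrel 0
      simp only [zero_div, zero_add] at h
      have h3 : (1 - ζ ^ k) * φ v = 0 := by rw [sub_mul, one_mul, sub_eq_zero]; exact h
      rcases mul_eq_zero.mp h3 with h | h
      · exact absurd (sub_eq_zero.mp h).symm hk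
      · exact h
    have hζk : ζ ^ k ≠ 0 := zpow_ne_zero _ hζ0
    have hind : ∀ j : ℕ, φ ((u : F) ^ j + v) = ζ ^ (-(k * (j : ℤ))) * φ (1 + v) := by
      intro j
      induction j with
      | zero => simp
      | succ j ih =>
        have h := hrel ((u : F) ^ (j + 1))
        rw [show (u : F) ^ (j + 1) / u = (u : F) ^ j from by
          rw [pow_succ, mul_div_cancel_right₀ _ hu0], ih] at h
        have h3 : φ ((u : F) ^ (j + 1) + v) =
            (ζ ^ k)⁻¹ * (ζ ^ (-(k * (j : ℤ))) * φ (1 + v)) := by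
          rw [h, inv_mul_cancel_left₀ hζk]
        rw [h3, ← zpow_neg, ← mul_assoc, ← zpow_add₀ hζ0]
        congr 2
        push_cast
        ring
    have hsq : (Real.sqrt ((n : ℝ) - 1) : ℂ) ≠ 0 := by
      rw [Complex.ofReal_ne_zero]
      refine (Real.sqrt_ne_zero' ).mpr ?_
      have : (2 : ℝ) < n := by exact_mod_cast hq
      linarith
    refine ⟨φ (1 + v) * (Real.sqrt ((n : ℝ) - 1) : ℂ), ?_⟩
    funext x
    simp only [Pi.smul_apply, smul_eq_mul]
    by_cases hx : x = v
    · rw [hx, sub_self, hφk0zero, hv0, mul_zero]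
    · obtain ⟨j, hj⟩ := hpow (x - v) (sub_ne_zero.mpr hx)
      have hx' : x = (u : F) ^ j + v := by rw [← hj]; ring
      rw [hx', hind j, show (u : F) ^ j + v - v = (u : F) ^ j by ring, hφk0]
      rw [show φ (1 + v) * (Real.sqrt ((n : ℝ) - 1) : ℂ) *
          (ζ ^ (-(k * (j : ℤ))) / (Real.sqrt ((n : ℝ) - 1) : ℂ)) =
          ζ ^ (-(k * (j : ℤ))) * φ (1 + v) *
          ((Real.sqrt ((n : ℝ) - 1) : ℂ) / (Real.sqrt ((n : ℝ) - 1) : ℂ)) by ring,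
        div_self hsq, mul_one]
end

section
/- If H is a subgroup of G that is maximal (i.e., H ≠ G and the only subgroups containing H are H and G), is not normal in G, and is cyclic, then H = C_b for some b ∈ F. -/
/-- The affine group of a field `F`: the pair `(a, b)` represents the
transformation `x ↦ a * x + b` of `F`. -/
structure Aff (F : Type*) [Field F] where
  a : Fˣ
  b : F

namespace Aff

variable {F : Type*} [Field F]

instance : Mul (Aff F) := ⟨fun g h => ⟨g.a * h.a, (g.a : F) * h.b + g.b⟩⟩
instance : One (Aff F) := ⟨⟨1, 0⟩⟩
instance : Inv (Aff F) := ⟨fun g => ⟨g.a⁻¹, -(((g.a⁻¹ : Fˣ) : F) * g.b)⟩⟩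

@[simp] lemma mul_a (g h : Aff F) : (g * h).a = g.a * h.a := rfl
@[simp] lemma mul_b (g h : Aff F) : (g * h).b = (g.a : F) * h.b + g.b := rfl
@[simp] lemma one_a : (1 : Aff F).a = 1 := rfl
@[simp] lemma one_b : (1 : Aff F).b = 0 := rfl
@[simp] lemma inv_a (g : Aff F) : (g⁻¹).a = g.a⁻¹ := rfl
@[simp] lemma inv_b (g : Aff F) : (g⁻¹).b = -(((g.a⁻¹ : Fˣ) : F) * g.b) := rfl

@[ext] lemma ext {g h : Aff F} (ha : g.a = h.a) (hb : g.b = h.b) : g = h := by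
  cases g; cases h; simp_all

instance : Group (Aff F) where
  mul_assoc g h k := by
    ext
    · simp [mul_assoc]
    · simp [mul_add, mul_assoc, add_assoc]
  one_mul g := by ext <;> simp
  mul_one g := by ext <;> simp
  inv_mul_cancel g := by ext <;> simp

end Aff

section Aux

variable {F : Type*} [Field F]

/-- The homomorphism sending an affine map to its linear coefficient. -/
def affA : Aff F →* Fˣ where
  toFun g := g.a
  map_one' := rfl
  map_mul' _ _ := rfl

/-- The stabilizer of a point `x₀` as a subgroup of the affine group. -/
def fixSub (x₀ : F) : Subgroup (Aff F) where
  carrier := {h | (h.a : F) * x₀ + h.b = x₀}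
  one_mem' := by simp
  mul_mem' := by
    intro p q hp hq
    simp only [Set.mem_setOf_eq, Aff.mul_a, Aff.mul_b, Units.val_mul] at *
    linear_combination hp + (p.a : F) * hq
  inv_mem' := by
    intro h hp
    simp only [Set.mem_setOf_eq, Aff.inv_a, Aff.inv_b] at *
    have hinv : ((h.a⁻¹ : Fˣ) : F) * (h.a : F) = 1 := by
      rw [← Units.val_mul, inv_mul_cancel, Units.val_one]
    linear_combination x₀ * hinv - ((h.a⁻¹ : Fˣ) : F) * hp

/-- Embedding of `Fˣ` into the affine group as the stabilizer of `x₀`. -/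
def stabHom (x₀ : F) : Fˣ →* Aff F where
  toFun c := ⟨c, (1 - (c : F)) * x₀⟩
  map_one' := by ext <;> simp
  map_mul' c d := by
    ext
    · rfl
    · show (1 - ((c * d : Fˣ) : F)) * x₀ = (c : F) * ((1 - (d : F)) * x₀) + (1 - (c : F)) * x₀
      push_cast
      ring

end Aux

/-- Every maximal, non-normal, cyclic subgroup of the affine group of a finite field
is `C_b = ⟨(u,b)⟩` for some `b ∈ F`. -/
theorem statement_7 {F : Type*} [Field F] [Fintype F]
    (u : Fˣ) (hu : ∀ x : Fˣ, x ∈ Subgroup.zpowers u)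
    (H : Subgroup (Aff F))
    (hne : H ≠ ⊤)
    (hmax : ∀ K : Subgroup (Aff F), H ≤ K → K = H ∨ K = ⊤)
    (hnonnormal : ¬ H.Normal)
    (hcyclic : ∃ g : Aff F, H = Subgroup.zpowers g) :
    ∃ b : F, H = Subgroup.zpowers (⟨u, b⟩ : Aff F) := by
  obtain ⟨g, rfl⟩ := hcyclic
  by_cases ha : g.a = 1
  · -- `g` is a translation, contradiction with non-normality
    exfalso
    have hle : Subgroup.zpowers g ≤ (affA (F := F)).ker := by
      rw [Subgroup.zpowers_le]
      exact ha
    rcases hmax _ hle with hk | hk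
    · exact hnonnormal (hk ▸ MonoidHom.normal_ker _)
    · -- every element has linear coefficient 1, so the group is abelian
      apply hnonnormal
      have hall : ∀ x : Aff F, x.a = 1 := by
        intro x
        have : x ∈ (affA (F := F)).ker := hk ▸ Subgroup.mem_top x
        exact this
      constructor
      intro n hn x
      have hx := hall x
      have hn' := hall n
      have : x * n * x⁻¹ = n := by
        ext
        · simp [hx, hn']
        · simp [hx, hn']
      rw [this]
      exact hn
  · -- `g` has a fixed point `x₀`; `H` equals the stabilizer of `x₀`
    have ha' : (1 : F) - (g.a : F) ≠ 0 := by
      intro h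
      exact ha (Units.ext (sub_eq_zero.mp h).symm)
    set x₀ : F := g.b / (1 - (g.a : F)) with hx₀
    set k : Aff F := ⟨u, (1 - (u : F)) * x₀⟩ with hk
    have hkval : stabHom x₀ u = k := rfl
    have hgmem : g ∈ Subgroup.zpowers k := by
      obtain ⟨n, hn⟩ := hu g.a
      have hn' : u ^ n = g.a := hn
      have : g = (stabHom x₀) (u ^ n) := by
        ext
        · exact congrArg Units.val hn'.symm
        · show g.b = (1 - ((u ^ n : Fˣ) : F)) * x₀
          rw [hn', hx₀]
          field_simp
      rw [this, map_zpow, hkval]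
      exact ⟨n, rfl⟩
    have hle : Subgroup.zpowers g ≤ Subgroup.zpowers k :=
      Subgroup.zpowers_le.mpr hgmem
    rcases hmax _ hle with hK | hK
    · exact ⟨(1 - (u : F)) * x₀, hK.symm⟩
    · -- impossible: the stabilizer of `x₀` is a proper subgroup
      exfalso
      have hkfix : k ∈ fixSub x₀ := by
        show (u : F) * x₀ + (1 - (u : F)) * x₀ = x₀
        ring
      have hles : Subgroup.zpowers k ≤ fixSub x₀ := Subgroup.zpowers_le.mpr hkfix
      have : (⟨1, 1⟩ : Aff F) ∈ fixSub x₀ := hles (hK ▸ Subgroup.mem_top _)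
      have : (1 : F) * x₀ + 1 = x₀ := this
      simp at this
end

section
/- Assume q > 2 and let b ∈ F, r ∈ ℤ, and x ∈ F with x ≠ b/(1−u). Define v ∈ L²(F^× × F) by v = (1/√(q−1)) Σ_{j=0}^{q−2} δ_{u^{j+r}} ⊗ δ_{u^j x + ((u^j−1)/(u−1))b}, and let w = (F_M ⊗ I)v. Then: (i) w(1, y) = 1/(q−1) for every y ∈ F with y ≠ b/(1−u), and w(1, b/(1−u)) = 0; (ii) for every integer k with ζ^k ≠ 1, the function f_k : F → ℂ, f_k(y) = w(u^k, y), is a nonzero complex scalar multiple of φ_{−k, b/(1−u)}. -/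
/-- Let `x ≠ b/(1-u)` and
`v = (1/√(q-1)) Σ_{j=0}^{q-2} δ_{u^{j+r}} ⊗ δ_{u^j x + ((u^j-1)/(u-1))b}` in `L²(F^× × F)`,
and let `w = (F_M ⊗ I)v` (characterized by `w(u^k, y) = (1/√(q-1)) Σ_j ζ^{kj} v(u^j, y)`).
Then (i) `w(1, y) = 1/(q-1)` for `y ≠ b/(1-u)` and `w(1, b/(1-u)) = 0`, and
(ii) for every integer `k` with `ζ^k ≠ 1`, the function `y ↦ w(u^k, y)` is a nonzero scalar
multiple of `φ_{-k, b/(1-u)}`, where `φ_{m,0}` is the function with `φ_{m,0}(0) = 0` and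
`φ_{m,0}(u^j) = ζ^{-mj}/√(q-1)`, and `φ_{m,v}(y) = φ_{m,0}(y-v)`. -/
theorem statement_9 {F : Type*} [Field F] [Fintype F] [DecidableEq F]
    (hq : 2 < Fintype.card F)
    (u : Fˣ) (hu : ∀ g : Fˣ, g ∈ Subgroup.zpowers u)
    (ζ : ℂ) (hζ : ζ = Complex.exp (2 * Real.pi * Complex.I / ((Fintype.card F : ℂ) - 1)))
    (φ : ℤ → F → ℂ) (hφzero : ∀ m : ℤ, φ m 0 = 0)
    (hφ : ∀ (m : ℤ) (j : ℕ), φ m ((u : F) ^ j) =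
      ζ ^ (-(m * (j : ℤ))) / (Real.sqrt ((Fintype.card F : ℝ) - 1) : ℂ))
    (b x : F) (r : ℤ) (hx : x ≠ b / (1 - (u : F)))
    (v w : Fˣ × F → ℂ)
    (hv : v = fun p => (1 / (Real.sqrt ((Fintype.card F : ℝ) - 1) : ℂ)) *
      ∑ j ∈ Finset.range (Fintype.card F - 1),
        if p = (u ^ ((j : ℤ) + r),
            (u : F) ^ j * x + (((u : F) ^ j - 1) / ((u : F) - 1)) * b)
          then 1 else 0)
    (hw : ∀ (k : ℤ) (y : F), w (u ^ k, y) =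
      (1 / (Real.sqrt ((Fintype.card F : ℝ) - 1) : ℂ)) *
        ∑ j ∈ Finset.range (Fintype.card F - 1), ζ ^ (k * (j : ℤ)) * v (u ^ (j : ℤ), y)) :
    (∀ y : F, y ≠ b / (1 - (u : F)) → w (1, y) = 1 / ((Fintype.card F : ℂ) - 1)) ∧
    w (1, b / (1 - (u : F))) = 0 ∧
    (∀ k : ℤ, ζ ^ k ≠ 1 → ∃ z : ℂ, z ≠ 0 ∧
      (fun y => w (u ^ k, y)) = z • fun y => φ (-k) (y - b / (1 - (u : F)))) := by
  classical
  have hq1 : 1 ≤ Fintype.card F := Fintype.card_pos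
  set n : ℕ := Fintype.card F - 1 with hndef
  have hn2 : 2 ≤ n := by omega
  have hnzZ : (0:ℤ) < (n:ℤ) := by exact_mod_cast (show 0 < n by omega)
  set S : ℂ := ((Real.sqrt ((Fintype.card F : ℝ) - 1) : ℝ) : ℂ) with hSdef
  set c : F := b / (1 - (u : F)) with hcdef
  have hcardR : ((Fintype.card F : ℝ) - 1) = (n : ℝ) := by
    have h : Fintype.card F = n + 1 := by omega
    rw [h]; push_cast; ring
  have hcardC : ((Fintype.card F : ℂ) - 1) = (n : ℂ) := by
    have h : Fintype.card F = n + 1 := by omega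
    rw [h]; push_cast; ring
  have hSS : S * S = (n : ℂ) := by
    rw [hSdef, hcardR, ← Complex.ofReal_mul,
      Real.mul_self_sqrt (by positivity)]
    norm_cast
  have hS0 : S ≠ 0 := by
    rw [hSdef, hcardR]
    exact_mod_cast ne_of_gt (Real.sqrt_pos.mpr (by exact_mod_cast (show 0 < n by omega)))
  -- order of u
  have horder : orderOf u = n := by
    have h1 : orderOf u = Nat.card Fˣ := orderOf_eq_card_of_forall_mem_zpowers hu
    rw [h1, Nat.card_eq_fintype_card, Fintype.card_units]
  -- ζ facts
  have hζ0 : ζ ≠ 0 := by rw [hζ]; exact Complex.exp_ne_zero _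
  have hζn : ζ ^ (n : ℤ) = 1 := by
    have hne : (n : ℂ) ≠ 0 := by exact_mod_cast (show n ≠ 0 by omega)
    rw [hζ, hcardC, zpow_natCast, ← Complex.exp_nat_mul,
      show (n:ℂ) * (2 * Real.pi * Complex.I / (n:ℂ)) = 2 * Real.pi * Complex.I from by
        field_simp, Complex.exp_two_pi_mul_I]
  have hζperiod : ∀ a : ℤ, ζ ^ a = ζ ^ (a % (n : ℤ)) := by
    intro a
    conv_lhs => rw [← Int.mul_ediv_add_emod a (n : ℤ)]
    rw [zpow_add₀ hζ0, zpow_mul, hζn, one_zpow, one_mul]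
  have hζcong : ∀ a b : ℤ, a % (n : ℤ) = b % (n : ℤ) → ζ ^ a = ζ ^ b := by
    intro a b h; rw [hζperiod a, hζperiod b, h]
  have hupow : ∀ a b : ℤ, u ^ a = u ^ b ↔ a % (n : ℤ) = b % (n : ℤ) := by
    intro a b
    rw [zpow_eq_zpow_iff_modEq, horder]
    exact Iff.rfl
  have hgen : ∀ y : F, y ≠ 0 → ∃ t : ℕ, (u : F) ^ t = y := by
    intro y hy
    obtain ⟨m, hm⟩ := hu (Units.mk0 y hy)
    have hm' : u ^ m = Units.mk0 y hy := hm
    refine ⟨(m % (n : ℤ)).toNat, ?_⟩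
    have hnn : 0 ≤ m % (n : ℤ) := Int.emod_nonneg m (by omega)
    have h1 : u ^ (((m % (n : ℤ)).toNat : ℤ)) = u ^ m := by
      rw [hupow, Int.toNat_of_nonneg hnn]
      exact Int.emod_emod_of_dvd m dvd_rfl
    calc (u : F) ^ ((m % (n : ℤ)).toNat) = ((u ^ ((m % (n : ℤ)).toNat) : Fˣ) : F) := by
          rw [Units.val_pow_eq_pow_val]
      _ = ((u ^ (((m % (n : ℤ)).toNat : ℤ)) : Fˣ) : F) := by rw [zpow_natCast]
      _ = ((u ^ m : Fˣ) : F) := by rw [h1]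
      _ = y := by rw [hm']; rfl
  have hune : (u : F) ≠ 1 := by
    intro h
    have h1 : u = 1 := Units.ext h
    rw [h1, orderOf_one] at horder
    omega
  have hu1 : (u : F) - 1 ≠ 0 := sub_ne_zero.mpr hune
  have h1u : (1 : F) - (u : F) ≠ 0 := sub_ne_zero.mpr (Ne.symm hune)
  have hxc : x - c ≠ 0 := sub_ne_zero.mpr hx
  obtain ⟨s, hs⟩ := hgen (x - c) hxc
  have hgeq : ∀ i : ℕ, (u : F) ^ i * x + (((u : F) ^ i - 1) / ((u : F) - 1)) * b
      = (u : F) ^ (i + s) + c := by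
    intro i
    have hb : c * (1 - (u : F)) = b := by rw [hcdef]; field_simp
    rw [pow_add, hs, ← hb]
    field_simp
    ring
  -- inner sum evaluation
  have hinner : ∀ (k a : ℤ),
      (∑ j ∈ Finset.range n, if u ^ (j : ℤ) = u ^ a then ζ ^ (k * (j : ℤ)) else 0)
        = ζ ^ (k * a) := by
    intro k a
    have ha0 : 0 ≤ a % (n : ℤ) := Int.emod_nonneg a (by omega)
    have haJ : (((a % (n : ℤ)).toNat : ℤ)) = a % (n : ℤ) := Int.toNat_of_nonneg ha0
    set J : ℕ := (a % (n : ℤ)).toNat with hJdef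
    have hJn : J < n := by
      have h1 : a % (n : ℤ) < (n : ℤ) := Int.emod_lt_of_pos a hnzZ
      omega
    have hcond : ∀ j : ℕ, j < n → (u ^ (j : ℤ) = u ^ a ↔ j = J) := by
      intro j hj
      rw [hupow]
      have hjm : (j : ℤ) % (n : ℤ) = (j : ℤ) :=
        Int.emod_eq_of_lt (by positivity) (by exact_mod_cast hj)
      constructor
      · intro h; omega
      · rintro rfl
        rw [hjm, haJ]
    calc (∑ j ∈ Finset.range n, if u ^ (j : ℤ) = u ^ a then ζ ^ (k * (j : ℤ)) else 0)
        = ∑ j ∈ Finset.range n, if j = J then ζ ^ (k * (j : ℤ)) else 0 := by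
          refine Finset.sum_congr rfl fun j hj => ?_
          rw [Finset.mem_range] at hj
          exact if_congr (hcond j hj) rfl rfl
      _ = ζ ^ (k * (J : ℤ)) := by
          rw [Finset.sum_ite_eq' (Finset.range n) J fun j => ζ ^ (k * (j : ℤ))]
          simp [hJn]
      _ = ζ ^ (k * a) := by
          refine hζcong _ _ ?_
          have : (J : ℤ) ≡ a [ZMOD (n : ℤ)] := by
            show (J : ℤ) % n = a % n
            rw [haJ]; exact Int.emod_emod_of_dvd a dvd_rfl
          exact (this.mul_left k)
  -- main formula
  have hmain : ∀ (k : ℤ) (y : F), w (u ^ k, y) =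
      (1 / (S * S)) * ∑ i ∈ Finset.range n,
        (if y = (u : F) ^ (i + s) + c then ζ ^ (k * ((i : ℤ) + r)) else 0) := by
    intro k y
    rw [hw k y]
    simp only [hv]
    have T1 : ∀ j ∈ Finset.range n, ζ ^ (k * (j : ℤ)) *
        ((1 / S) * ∑ i ∈ Finset.range n,
          if ((u ^ (j : ℤ) : Fˣ), y) = (u ^ ((i : ℤ) + r),
              (u : F) ^ i * x + (((u : F) ^ i - 1) / ((u : F) - 1)) * b) then (1:ℂ) else 0)
        = ∑ i ∈ Finset.range n,
            (if y = (u : F) ^ (i + s) + c then (1 / S) *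
              (if u ^ (j : ℤ) = u ^ ((i : ℤ) + r) then ζ ^ (k * (j : ℤ)) else 0) else 0) := by
      intro j _
      rw [Finset.mul_sum, Finset.mul_sum]
      refine Finset.sum_congr rfl fun i _ => ?_
      rw [hgeq i] at *
      simp only [Prod.mk.injEq]
      by_cases h1 : u ^ (j : ℤ) = u ^ ((i : ℤ) + r) <;>
        by_cases h2 : y = (u : F) ^ (i + s) + c <;>
        simp [h1, h2, And.comm] <;> ring
    rw [Finset.sum_congr rfl T1, Finset.sum_comm]
    have T2 : ∀ i ∈ Finset.range n,
        (∑ j ∈ Finset.range n, if y = (u : F) ^ (i + s) + c then (1 / S) *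
            (if u ^ (j : ℤ) = u ^ ((i : ℤ) + r) then ζ ^ (k * (j : ℤ)) else 0) else 0)
          = (1 / S) * (if y = (u : F) ^ (i + s) + c then ζ ^ (k * ((i : ℤ) + r)) else 0) := by
      intro i _
      by_cases h2 : y = (u : F) ^ (i + s) + c
      · simp only [if_pos h2]
        rw [← Finset.mul_sum, hinner k ((i : ℤ) + r)]
      · simp [h2]
    rw [Finset.sum_congr rfl T2, ← Finset.mul_sum]
    ring
  -- evaluation at y = c
  have hweval0 : ∀ k : ℤ, w (u ^ k, c) = 0 := by
    intro k
    rw [hmain k c]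
    have : ∀ i ∈ Finset.range n,
        (if c = (u : F) ^ (i + s) + c then ζ ^ (k * ((i : ℤ) + r)) else 0) = 0 := by
      intro i _
      have hne : c ≠ (u : F) ^ (i + s) + c := by
        intro h
        have : (u : F) ^ (i + s) = 0 := by linear_combination -h
        exact pow_ne_zero (i + s) (Units.ne_zero u) this
      simp [hne]
    rw [Finset.sum_congr rfl this]
    simp
  -- evaluation at y = u^t + c
  have hwevalt : ∀ (k : ℤ) (t : ℕ), w (u ^ k, (u : F) ^ t + c) =
      (1 / (S * S)) * ζ ^ (k * ((t : ℤ) - (s : ℤ) + r)) := by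
    intro k t
    rw [hmain k ((u : F) ^ t + c)]
    have haI0 : 0 ≤ ((t : ℤ) - s) % (n : ℤ) := Int.emod_nonneg _ (by omega)
    set I : ℕ := (((t : ℤ) - s) % (n : ℤ)).toNat with hIdef
    have haI : (I : ℤ) = ((t : ℤ) - s) % (n : ℤ) := Int.toNat_of_nonneg haI0
    have hIn : I < n := by
      have h1 : ((t : ℤ) - s) % (n : ℤ) < (n : ℤ) := Int.emod_lt_of_pos _ hnzZ
      omega
    have hcond : ∀ i : ℕ, i < n →
        ((u : F) ^ t + c = (u : F) ^ (i + s) + c ↔ i = I) := by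
      intro i hi
      have him : (i : ℤ) % (n : ℤ) = (i : ℤ) :=
        Int.emod_eq_of_lt (by positivity) (by exact_mod_cast hi)
      constructor
      · intro h
        have h1 : (u : F) ^ t = (u : F) ^ (i + s) := by linear_combination h
        have h2 : u ^ t = u ^ (i + s) := Units.ext (by
          rw [Units.val_pow_eq_pow_val, Units.val_pow_eq_pow_val]; exact h1)
        have h3 : u ^ (t : ℤ) = u ^ ((i : ℤ) + s) := by
          rw [show ((i : ℤ) + s) = ((i + s : ℕ) : ℤ) by push_cast; ring,
            zpow_natCast, zpow_natCast]
          exact h2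
        rw [hupow] at h3
        -- (t) ≡ i + s  [n]  →  i ≡ t - s [n]  → i = I
        have h4 : ((i : ℤ)) % (n : ℤ) = ((t : ℤ) - s) % (n : ℤ) := by
          have : ((t : ℤ) - s) % (n : ℤ) = (((i : ℤ) + s) - s) % (n : ℤ) := by
            exact (Int.ModEq.sub_right (s : ℤ) h3)
          simpa using this.symm
        omega
      · rintro rfl
        have h3 : u ^ ((I : ℤ) + s) = u ^ (t : ℤ) := by
          rw [hupow]
          have : ((I : ℤ) + s) % (n : ℤ) = (((t : ℤ) - s) + s) % (n : ℤ) := by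
            rw [haI]
            exact Int.ModEq.add_right (s : ℤ) (Int.emod_emod_of_dvd _ dvd_rfl)
          simpa using this
        have h2 : u ^ (I + s) = u ^ t := by
          rw [← zpow_natCast u (I + s), ← zpow_natCast u t,
            show ((I + s : ℕ) : ℤ) = (I : ℤ) + s by push_cast; ring]
          exact h3
        have := congrArg (Units.val) h2
        rw [Units.val_pow_eq_pow_val, Units.val_pow_eq_pow_val] at this
        rw [this]
    have T : ∀ i ∈ Finset.range n,
        (if (u : F) ^ t + c = (u : F) ^ (i + s) + c then ζ ^ (k * ((i : ℤ) + r)) else 0)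
          = (if i = I then ζ ^ (k * ((i : ℤ) + r)) else 0) := by
      intro i hi
      rw [Finset.mem_range] at hi
      exact if_congr (hcond i hi) rfl rfl
    rw [Finset.sum_congr rfl T,
      Finset.sum_ite_eq' (Finset.range n) I fun i => ζ ^ (k * ((i : ℤ) + r))]
    simp only [Finset.mem_range, hIn, if_true]
    congr 1
    refine hζcong _ _ ?_
    have h5 : (I : ℤ) ≡ (t : ℤ) - s [ZMOD (n : ℤ)] := by
      show (I : ℤ) % n = ((t : ℤ) - s) % n
      rw [haI]; exact Int.emod_emod_of_dvd _ dvd_rfl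
    exact ((h5.add_right r).mul_left k)
  -- now conclude
  have hone : (1 : Fˣ) = u ^ (0 : ℤ) := (zpow_zero u).symm
  refine ⟨?_, ?_, ?_⟩
  · intro y hy
    obtain ⟨t, ht⟩ := hgen (y - c) (sub_ne_zero.mpr hy)
    have hyt : y = (u : F) ^ t + c := by rw [ht]; ring
    rw [hone, hyt, hwevalt 0 t, hcardC, hSS]
    norm_num
  · rw [hone]; exact hweval0 0
  · intro k _
    refine ⟨ζ ^ (k * (r - (s : ℤ))) / S, div_ne_zero (zpow_ne_zero _ hζ0) hS0, ?_⟩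
    funext y
    simp only [Pi.smul_apply, smul_eq_mul, ← hcdef]
    by_cases hy : y = c
    · rw [hy, hweval0 k, sub_self, hφzero]
      ring
    · obtain ⟨t, ht⟩ := hgen (y - c) (sub_ne_zero.mpr hy)
      have hyt : y = (u : F) ^ t + c := by rw [ht]; ring
      rw [hyt, hwevalt k t, show (u : F) ^ t + c - c = (u : F) ^ t by ring, hφ (-k) t]
      rw [show (-(-k * (t : ℤ))) = k * (t : ℤ) by ring]
      rw [show k * ((t : ℤ) - s + r) = k * (r - (s : ℤ)) + k * (t : ℤ) by ring,
        zpow_add₀ hζ0]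
      field_simp
end

section
/- Assume q > 2. For all b, x ∈ F and every integer k, the vector Σ_{j=0}^{q−2} ζ^{kj} δ_{((u^j−1)/(u−1))b + u^j x} ∈ L²(F) is an eigenvector of π((u,b)) with eigenvalue ζ^{−k}: π((u,b)) (Σ_{j=0}^{q−2} ζ^{kj} δ_{((u^j−1)/(u−1))b + u^j x}) = ζ^{−k} Σ_{j=0}^{q−2} ζ^{kj} δ_{((u^j−1)/(u−1))b + u^j x}. -/
/-- For all `b, x ∈ F` and `k ∈ ℤ`, the vector
`S = Σ_{j=0}^{q-2} ζ^{kj} δ_{((u^j-1)/(u-1))b + u^j x}` is an eigenvector of `π((u,b))`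
with eigenvalue `ζ^{-k}`, where `(π(a,b)f)(y) = f((y-b)/a)`. -/
theorem statement_10 {F : Type*} [Field F] [Fintype F] [DecidableEq F]
    (hq : 2 < Fintype.card F)
    (u : Fˣ) (hu : ∀ g : Fˣ, g ∈ Subgroup.zpowers u)
    (ζ : ℂ) (hζ : ζ = Complex.exp (2 * Real.pi * Complex.I / ((Fintype.card F : ℂ) - 1)))
    (b x : F) (k : ℤ) :
    (fun y : F => ∑ j ∈ Finset.range (Fintype.card F - 1), ζ ^ (k * (j : ℤ)) *
        (if (y - b) / (u : F) = (((u : F) ^ j - 1) / ((u : F) - 1)) * b + (u : F) ^ j * x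
          then 1 else 0)) =
      ζ ^ (-k) • fun y : F => ∑ j ∈ Finset.range (Fintype.card F - 1), ζ ^ (k * (j : ℤ)) *
        (if y = (((u : F) ^ j - 1) / ((u : F) - 1)) * b + (u : F) ^ j * x
          then 1 else 0) := by
  have hq1 : 1 ≤ Fintype.card F := by omega
  set n := Fintype.card F - 1 with hn
  have hn2 : 2 ≤ n := by omega
  have hu0 : (u : F) ≠ 0 := Units.ne_zero u
  have hun : (u : F) ^ n = 1 := FiniteField.pow_card_sub_one_eq_one _ hu0
  have hu1 : (u : F) - 1 ≠ 0 := by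
    intro h
    have hu' : u = 1 := Units.ext (by rwa [sub_eq_zero] at h)
    have hc : 1 < Fintype.card Fˣ := by rw [Fintype.card_units]; omega
    obtain ⟨g, hg⟩ := Fintype.exists_ne_of_one_lt_card hc 1
    obtain ⟨m, hm⟩ := hu g
    apply hg
    rw [← hm, hu']
    simp
  have hζ0 : ζ ≠ 0 := by rw [hζ]; exact Complex.exp_ne_zero _
  have hnC : (n : ℂ) ≠ 0 := Nat.cast_ne_zero.mpr (by omega)
  have hcast : ((Fintype.card F : ℂ) - 1) = (n : ℂ) := by
    rw [hn, Nat.cast_sub hq1]; push_cast; ring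
  have hζn : ζ ^ (n : ℕ) = 1 := by
    rw [hζ, hcast, ← Complex.exp_nat_mul]
    rw [show (n : ℂ) * (2 * Real.pi * Complex.I / (n : ℂ)) = 2 * Real.pi * Complex.I by
      field_simp]
    exact Complex.exp_two_pi_mul_I
  have hζnz : ζ ^ ((n : ℕ) : ℤ) = 1 := by rw [zpow_natCast]; exact hζn
  funext y
  simp only [Pi.smul_apply, smul_eq_mul, Finset.mul_sum]
  have key : ∀ j : ℕ,
      ((y - b) / (u : F) = (((u : F) ^ j - 1) / ((u : F) - 1)) * b + (u : F) ^ j * x) ↔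
      (y = (((u : F) ^ (j + 1) - 1) / ((u : F) - 1)) * b + (u : F) ^ (j + 1) * x) := by
    intro j
    rw [div_eq_iff hu0, sub_eq_iff_eq_add]
    constructor
    · intro h; rw [h]; field_simp; ring
    · intro h; rw [h]; field_simp; ring
  simp_rw [key]
  have hterm : ∀ j : ℕ, ζ ^ (k * (j : ℤ)) *
      (if y = (((u : F) ^ (j + 1) - 1) / ((u : F) - 1)) * b + (u : F) ^ (j + 1) * x
        then (1 : ℂ) else 0)
      = ζ ^ (-k) * (ζ ^ (k * ((j + 1 : ℕ) : ℤ)) *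
      (if y = (((u : F) ^ (j + 1) - 1) / ((u : F) - 1)) * b + (u : F) ^ (j + 1) * x
        then (1 : ℂ) else 0)) := by
    intro j
    rw [← mul_assoc, ← zpow_add₀ hζ0]
    congr 2
    push_cast; ring
  simp_rw [hterm, ← Finset.mul_sum]
  congr 1
  set H : ℕ → ℂ := fun j => ζ ^ (k * (j : ℤ)) *
    (if y = (((u : F) ^ j - 1) / ((u : F) - 1)) * b + (u : F) ^ j * x then (1 : ℂ) else 0)
    with hH
  show ∑ j ∈ Finset.range n, H (j + 1) = ∑ j ∈ Finset.range n, H j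
  have h1 : ∑ j ∈ Finset.range (n + 1), H j
      = (∑ j ∈ Finset.range n, H (j + 1)) + H 0 := Finset.sum_range_succ' H n
  have h2 : ∑ j ∈ Finset.range (n + 1), H j
      = (∑ j ∈ Finset.range n, H j) + H n := Finset.sum_range_succ H n
  have h0 : H n = H 0 := by
    simp only [hH, hun, pow_zero, Nat.cast_zero, mul_zero, zpow_zero, mul_comm k,
      zpow_mul, hζnz]
  rw [h0] at h2
  exact add_right_cancel (h1.symm.trans h2)
end

section
/- Let b ∈ F and let w ∈ L²(F) be defined by w(s) = η(sb)/√(q−1) for s ∈ F^× and w(0) = 0. Then F_A^{−1} w = −ψ_b; explicitly, (F_A^{−1} w)(b) = √((q−1)/q) and (F_A^{−1} w)(t) = −1/√(q(q−1)) for every t ≠ b. In particular |(F_A^{−1} w)(b)|² = (q−1)/q. -/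
/-- The inverse additive Fourier transform `(F_A⁻¹ f)(t) = (1/√q) Σ_{z ∈ F} η(-tz) f(z)`. -/
noncomputable def invAddFourier {F : Type*} [Field F] [Fintype F]
    (η : F → ℂ) (f : F → ℂ) (t : F) : ℂ :=
  (1 / (Real.sqrt (Fintype.card F) : ℂ)) * ∑ z : F, η (-(t * z)) * f z

private lemma eta_zero {F : Type*} [Field F] [Fintype F] (η : F → ℂ)
    (hηadd : ∀ x y : F, η (x + y) = η x * η y)
    (hηabs : ∀ x : F, ‖η x‖ = 1) : η 0 = 1 := by
  have h0 : η 0 ≠ 0 := by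
    intro h'
    have := hηabs 0
    rw [h'] at this
    simp at this
  have h := hηadd 0 0
  rw [add_zero] at h
  exact (mul_left_cancel₀ h0 (by rw [mul_one]; exact h)).symm

private lemma sum_eta {F : Type*} [Field F] [Fintype F] (η : F → ℂ)
    (hηadd : ∀ x y : F, η (x + y) = η x * η y)
    (hηnt : ∃ x : F, η x ≠ 1) (c : F) (hc : c ≠ 0) :
    ∑ z : F, η (c * z) = 0 := by
  obtain ⟨x, hx⟩ := hηnt
  set z0 := c⁻¹ * x with hz0def
  have hz0 : c * z0 = x := by rw [hz0def, ← mul_assoc, mul_inv_cancel₀ hc, one_mul]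
  have key : ∑ z : F, η (c * z) = η x * ∑ z : F, η (c * z) := by
    calc ∑ z : F, η (c * z) = ∑ z : F, η (c * (z + z0)) :=
          (Fintype.sum_equiv (Equiv.addRight z0) _ _ (fun z => rfl)).symm
      _ = ∑ z : F, η x * η (c * z) := by
          refine Finset.sum_congr rfl fun z _ => ?_
          have harg : c * (z + z0) = c * z0 + c * z := by ring
          rw [harg, hηadd, hz0]
      _ = η x * ∑ z : F, η (c * z) := by rw [Finset.mul_sum]
  have : (η x - 1) * ∑ z : F, η (c * z) = 0 := by
    rw [sub_mul, one_mul, ← key, sub_self]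
  rcases mul_eq_zero.mp this with h | h
  · exact absurd (sub_eq_zero.mp h) hx
  · exact h

private lemma val_lemma {F : Type*} [Field F] [Fintype F] [DecidableEq F]
    (η : F → ℂ) (hηadd : ∀ x y : F, η (x + y) = η x * η y)
    (hηabs : ∀ x : F, ‖η x‖ = 1) (hηnt : ∃ x : F, η x ≠ 1)
    (b : F) (w : F → ℂ)
    (hw : w = fun s => if s = 0 then 0
      else η (s * b) / (Real.sqrt ((Fintype.card F : ℝ) - 1) : ℂ)) (t : F) :
    invAddFourier η w t =
      (1 / (Real.sqrt (Fintype.card F) : ℂ)) *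
        ((1 / (Real.sqrt ((Fintype.card F : ℝ) - 1) : ℂ)) *
          ((if t = b then (Fintype.card F : ℂ) else 0) - 1)) := by
  have hterm : ∀ z : F, η (-(t * z)) * w z =
      (1 / (Real.sqrt ((Fintype.card F : ℝ) - 1) : ℂ)) *
        (if z = 0 then 0 else η (z * (b - t))) := by
    intro z
    rw [hw]
    by_cases hz : z = 0
    · simp [hz]
    · simp only [hz, if_neg, if_false]
      have harg : z * (b - t) = -(t * z) + z * b := by ring
      rw [harg, hηadd]
      ring
  have hsum : ∑ z : F, (if z = 0 then (0:ℂ) else η (z * (b - t))) =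
      (if t = b then (Fintype.card F : ℂ) else 0) - 1 := by
    have hsplit : ∑ z : F, (if z = 0 then (0:ℂ) else η (z * (b - t))) =
        (∑ z : F, η (z * (b - t))) - η (0 * (b - t)) := by
      have h1 : (∑ z : F, η (z * (b - t))) =
          ∑ z : F, ((if z = 0 then η (z * (b - t)) else 0)
            + (if z = 0 then (0:ℂ) else η (z * (b - t)))) :=
        Finset.sum_congr rfl fun z _ => by by_cases hz : z = 0 <;> simp [hz]
      rw [eq_sub_iff_add_eq, h1, Finset.sum_add_distrib,
        Finset.sum_ite_eq' Finset.univ (0:F) (fun z => η (z * (b - t)))]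
      simp [add_comm]
    rw [hsplit, zero_mul, eta_zero η hηadd hηabs]
    by_cases ht : t = b
    · simp [ht, eta_zero η hηadd hηabs]
    · have hc : b - t ≠ 0 := sub_ne_zero.mpr (Ne.symm ht)
      have h0 : ∑ z : F, η (z * (b - t)) = 0 := by
        rw [← sum_eta η hηadd hηnt (b - t) hc]
        exact Finset.sum_congr rfl fun z _ => by rw [mul_comm]
      simp [ht, h0]
  unfold invAddFourier
  rw [Finset.sum_congr rfl fun z _ => hterm z, ← Finset.mul_sum, hsum]

/-- For `w ∈ L²(F)` with `w(s) = η(sb)/√(q-1)` for `s ≠ 0` and `w(0) = 0`, one has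
`F_A⁻¹ w = -ψ_b`; explicitly `(F_A⁻¹ w)(b) = √((q-1)/q)` and `(F_A⁻¹ w)(t) = -1/√(q(q-1))`
for `t ≠ b`.  In particular `|(F_A⁻¹ w)(b)|² = (q-1)/q`. -/
theorem statement_13 {F : Type*} [Field F] [Fintype F] [DecidableEq F]
    (η : F → ℂ) (hηadd : ∀ x y : F, η (x + y) = η x * η y)
    (hηabs : ∀ x : F, ‖η x‖ = 1) (hηnt : ∃ x : F, η x ≠ 1)
    (b : F)
    (w : F → ℂ)
    (hw : w = fun s => if s = 0 then 0
      else η (s * b) / (Real.sqrt ((Fintype.card F : ℝ) - 1) : ℂ)) :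
    invAddFourier η w = -psi F b ∧
    invAddFourier η w b =
      (Real.sqrt (((Fintype.card F : ℝ) - 1) / (Fintype.card F : ℝ)) : ℂ) ∧
    (∀ t : F, t ≠ b → invAddFourier η w t =
      -(1 / (Real.sqrt ((Fintype.card F : ℝ) * ((Fintype.card F : ℝ) - 1)) : ℂ))) ∧
    ‖invAddFourier η w b‖ ^ 2 =
      ((Fintype.card F : ℝ) - 1) / (Fintype.card F : ℝ) := by
  have hval := val_lemma η hηadd hηabs hηnt b w hw
  set q : ℕ := Fintype.card F with hq
  have hq2 : 2 ≤ q := Fintype.one_lt_card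
  have hqR : (2:ℝ) ≤ (q:ℝ) := by exact_mod_cast hq2
  have hq0 : (0:ℝ) < (q:ℝ) := by linarith
  have hq1 : (0:ℝ) < (q:ℝ) - 1 := by linarith
  have hcpos : (0:ℝ) < Real.sqrt q := Real.sqrt_pos.mpr hq0
  have hapos : (0:ℝ) < Real.sqrt ((q:ℝ) - 1) := Real.sqrt_pos.mpr hq1
  have hcne : ((Real.sqrt q : ℝ) : ℂ) ≠ 0 := by
    exact_mod_cast (ne_of_gt hcpos)
  have hane : ((Real.sqrt ((q:ℝ) - 1) : ℝ) : ℂ) ≠ 0 := by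
    exact_mod_cast (ne_of_gt hapos)
  have hA2 : ((Real.sqrt ((q:ℝ) - 1) : ℝ) : ℂ) * ((Real.sqrt ((q:ℝ) - 1) : ℝ) : ℂ)
      = (q : ℂ) - 1 := by
    rw [← Complex.ofReal_mul, Real.mul_self_sqrt (le_of_lt hq1)]
    push_cast
    ring
  -- value at b
  have hvb : invAddFourier η w b =
      ((Real.sqrt ((q:ℝ) - 1) : ℝ) : ℂ) / ((Real.sqrt q : ℝ) : ℂ) := by
    rw [hval b, if_pos rfl]
    field_simp
    rw [← hA2]; ring
  have hsqrt_div : (Real.sqrt (((q:ℝ) - 1) / (q:ℝ)) : ℂ)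
      = ((Real.sqrt ((q:ℝ) - 1) : ℝ) : ℂ) / ((Real.sqrt q : ℝ) : ℂ) := by
    rw [← Complex.ofReal_div, Real.sqrt_div (le_of_lt hq1)]
  -- value at t ≠ b
  have hvt : ∀ t : F, t ≠ b → invAddFourier η w t =
      -(1 / (Real.sqrt ((q:ℝ) * ((q:ℝ) - 1)) : ℂ)) := by
    intro t ht
    rw [hval t, if_neg ht, Real.sqrt_mul (le_of_lt hq0)]
    push_cast
    field_simp
    ring
  -- psi values
  have hpsi : invAddFourier η w = -psi F b := by
    funext t
    rw [Pi.neg_apply]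
    by_cases ht : t = b
    · subst ht
      rw [hvb]
      simp only [psi, psi0, phi00, sub_self, if_pos rfl, if_true, ← hq]
      field_simp
      ring
    · rw [hvt t ht]
      have hsub : t - b ≠ 0 := sub_ne_zero.mpr ht
      simp only [psi, psi0, phi00, if_neg hsub, ← hq]
      rw [Real.sqrt_mul (le_of_lt hq0)]
      push_cast
      field_simp
      ring
  refine ⟨hpsi, ?_, hvt, ?_⟩
  · rw [hvb, hsqrt_div]
  · rw [hvb, ← hsqrt_div, Complex.norm_real, Real.norm_eq_abs,
      abs_of_nonneg (Real.sqrt_nonneg _), Real.sq_sqrt (by positivity)]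
end

section
/- Let p be a prime and let n be an odd prime. Then, with φ denoting Euler's totient function, φ(p^n − 1)/(p^n − 1) ≥ (1 − 1/(2n+1))^n · ∏_{l prime, l < p} (1 − 1/l), where the product is over all primes l with l < p. -/
/-- A prime `q > p` dividing `p^n - 1` (with `n` an odd prime) satisfies `q ≥ 2n+1`. -/
lemma aux_large_prime (p n q : ℕ) (hp : p.Prime) (hn : n.Prime) (hnodd : Odd n)
    (hq : q.Prime) (hdvd : q ∣ p ^ n - 1) (hpq : p < q) : 2 * n + 1 ≤ q := by
  haveI : Fact q.Prime := ⟨hq⟩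
  have hp2 : 2 ≤ p := hp.two_le
  have hpn1 : 1 ≤ p ^ n := Nat.one_le_pow _ _ hp.pos
  have hq3 : 3 ≤ q := by
    rcases Nat.lt_or_ge q 3 with h | h
    · interval_cases q <;> omega
    · exact h
  have hcast : ((p : ZMod q)) ^ n = 1 := by
    have h0 : ((p ^ n - 1 : ℕ) : ZMod q) = 0 :=
      (ZMod.natCast_eq_zero_iff _ _).mpr hdvd
    rw [Nat.cast_sub hpn1] at h0
    push_cast at h0
    exact sub_eq_zero.mp h0
  have hne : (p : ZMod q) ≠ 0 := by
    rw [Ne, ZMod.natCast_eq_zero_iff]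
    intro h
    have := (Nat.prime_dvd_prime_iff_eq hq hp).mp h
    omega
  have hdvdn : orderOf (p : ZMod q) ∣ n := orderOf_dvd_of_pow_eq_one hcast
  have hd1 : orderOf (p : ZMod q) ≠ 1 := by
    intro h
    have hp1 : (p : ZMod q) = 1 := orderOf_eq_one_iff.mp h
    have : ((p - 1 : ℕ) : ZMod q) = 0 := by
      rw [Nat.cast_sub hp.one_le]
      push_cast
      rw [hp1]; ring
    have hdq : q ∣ p - 1 := (ZMod.natCast_eq_zero_iff _ _).mp this
    have := Nat.le_of_dvd (by omega) hdq
    omega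
  have hdn : orderOf (p : ZMod q) = n :=
    ((hn.eq_one_or_self_of_dvd _ hdvdn).resolve_left hd1)
  have hq1 : n ∣ q - 1 := by
    rw [← hdn]
    exact orderOf_dvd_of_pow_eq_one (ZMod.pow_card_sub_one_eq_one hne)
  have h2q1 : 2 ∣ q - 1 := by
    obtain ⟨k, hk⟩ := hq.odd_of_ne_two (by omega : q ≠ 2)
    omega
  have hco : Nat.Coprime 2 n := by
    rw [Nat.coprime_comm]
    exact Nat.Coprime.symm (Nat.coprime_two_left.mpr hnodd)
  have h2n : 2 * n ∣ q - 1 := Nat.Coprime.mul_dvd_of_dvd_of_dvd hco h2q1 hq1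
  have := Nat.le_of_dvd (by omega) h2n
  omega

/-- For `p` a prime and `n` an odd prime,
`φ(p^n - 1)/(p^n - 1) ≥ (1 - 1/(2n+1))^n · ∏_{l prime, l < p} (1 - 1/l)`. -/
theorem statement_17 (p n : ℕ) (hp : p.Prime) (hn : n.Prime) (hnodd : Odd n) :
    ((Nat.totient (p ^ n - 1) : ℝ)) / ((p ^ n - 1 : ℕ) : ℝ) ≥
      (1 - 1 / (2 * (n : ℝ) + 1)) ^ n *
        ∏ l ∈ (Finset.range p).filter Nat.Prime, (1 - 1 / (l : ℝ)) := by
  classical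
  have hp2 : 2 ≤ p := hp.two_le
  have hn2 : 2 ≤ n := hn.two_le
  have hpn1 : 1 ≤ p ^ n := Nat.one_le_pow _ _ hp.pos
  have h4 : 4 ≤ p ^ n := by
    calc (4:ℕ) = 2 ^ 2 := rfl
    _ ≤ p ^ 2 := Nat.pow_le_pow_left hp2 2
    _ ≤ p ^ n := Nat.pow_le_pow_right hp.pos hn2
  set N := p ^ n - 1 with hNdef
  have hN0 : 0 < N := by omega
  -- basic nonnegativity facts
  have hfac : ∀ q : ℕ, q.Prime → (0:ℝ) ≤ 1 - 1 / (q:ℝ) := by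
    intro q hq
    have h1 : (1:ℝ) ≤ (q:ℝ) := by exact_mod_cast hq.one_le
    have := div_le_one_of_le₀ h1 (by linarith)
    linarith
  have hfac1 : ∀ q : ℕ, q.Prime → (1 - 1 / (q:ℝ)) ≤ 1 := by
    intro q hq
    have h0 : (0:ℝ) < (q:ℝ) := by exact_mod_cast hq.pos
    have : (0:ℝ) ≤ 1 / (q:ℝ) := by positivity
    linarith
  -- the totient product formula
  have key : ((Nat.totient N : ℝ)) / (N : ℝ) = ∏ q ∈ N.primeFactors, (1 - 1/(q:ℝ)) := by
    have h := Nat.totient_eq_mul_prod_factors N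
    have h' : ((Nat.totient N : ℝ)) = (N:ℝ) * ∏ q ∈ N.primeFactors, (1 - 1/(q:ℝ)) := by
      have := congrArg (fun x : ℚ => (x : ℝ)) h
      push_cast at this
      simpa [one_div] using this
    rw [h', mul_div_cancel_left₀ _ (by exact_mod_cast (by omega : N ≠ 0) : (N:ℝ) ≠ 0)]
  have hpnotdvd : ¬ p ∣ N := by
    intro h
    have h1 : p ∣ p ^ n := dvd_pow_self p (by omega)
    have h2 : p ∣ p ^ n - N := Nat.dvd_sub h1 h
    have h3 : p ^ n - N = 1 := by omega
    rw [h3] at h2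
    have := Nat.le_of_dvd one_pos h2
    omega
  set S := N.primeFactors with hSdef
  have hmemS : ∀ q ∈ S, q.Prime ∧ q ∣ N ∧ q ≠ p := by
    intro q hqS
    obtain ⟨hq, hdvd, -⟩ := Nat.mem_primeFactors.mp hqS
    exact ⟨hq, hdvd, fun h => hpnotdvd (h ▸ hdvd)⟩
  set S₁ := S.filter (fun q => q < p) with hS1
  set S₂ := S.filter (fun q => p < q) with hS2
  have hsplit : ∏ q ∈ S, (1 - 1/(q:ℝ)) =
      (∏ q ∈ S₁, (1 - 1/(q:ℝ))) * ∏ q ∈ S₂, (1 - 1/(q:ℝ)) := by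
    rw [← Finset.prod_filter_mul_prod_filter_not S (fun q => q < p)]
    congr 1
    apply Finset.prod_congr _ (fun _ _ => rfl)
    ext q
    simp only [hS2, Finset.mem_filter]
    constructor
    · rintro ⟨hqS, hlt⟩
      have := (hmemS q hqS).2.2
      exact ⟨hqS, by omega⟩
    · rintro ⟨hqS, hlt⟩
      exact ⟨hqS, by omega⟩
  -- bound 1 : the small primes product
  have hsub : S₁ ⊆ (Finset.range p).filter Nat.Prime := by
    intro q hq
    rw [hS1, Finset.mem_filter] at hq
    exact Finset.mem_filter.mpr ⟨Finset.mem_range.mpr hq.2, (hmemS q hq.1).1⟩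
  have hprodS1nonneg : (0:ℝ) ≤ ∏ q ∈ S₁, (1 - 1/(q:ℝ)) :=
    Finset.prod_nonneg (fun q hq => hfac q (hmemS q (Finset.mem_filter.mp hq).1).1)
  have bound1 : (∏ l ∈ (Finset.range p).filter Nat.Prime, (1 - 1 / (l : ℝ)))
      ≤ ∏ q ∈ S₁, (1 - 1/(q:ℝ)) := by
    rw [← Finset.prod_sdiff hsub]
    have hle1 : (∏ l ∈ ((Finset.range p).filter Nat.Prime) \ S₁, (1 - 1 / (l : ℝ))) ≤ 1 := by
      apply Finset.prod_le_one
      · intro l hl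
        exact hfac l (Finset.mem_filter.mp (Finset.mem_sdiff.mp hl).1).2
      · intro l hl
        exact hfac1 l (Finset.mem_filter.mp (Finset.mem_sdiff.mp hl).1).2
    calc (∏ l ∈ ((Finset.range p).filter Nat.Prime) \ S₁, (1 - 1 / (l : ℝ))) *
          ∏ q ∈ S₁, (1 - 1/(q:ℝ))
        ≤ 1 * ∏ q ∈ S₁, (1 - 1/(q:ℝ)) := by
          apply mul_le_mul_of_nonneg_right hle1 hprodS1nonneg
      _ = ∏ q ∈ S₁, (1 - 1/(q:ℝ)) := one_mul _
  -- bound 2 : the large primes product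
  set c : ℝ := 1 - 1 / (2 * (n : ℝ) + 1) with hc
  have hn0 : (0:ℝ) < 2 * (n:ℝ) + 1 := by positivity
  have hc0 : 0 ≤ c := by
    rw [hc]
    have : 1 / (2 * (n:ℝ) + 1) ≤ 1 := by
      rw [div_le_one hn0]
      have : (0:ℝ) ≤ (n:ℝ) := Nat.cast_nonneg n
      linarith
    linarith
  have hc1 : c ≤ 1 := by
    have : (0:ℝ) ≤ 1 / (2 * (n:ℝ) + 1) := by positivity
    rw [hc]; linarith
  have hcard : S₂.card ≤ n := by
    have hdvd : (∏ q ∈ S₂, q) ∣ N := by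
      refine dvd_trans ?_ (Nat.prod_primeFactors_dvd N)
      exact Finset.prod_dvd_prod_of_subset S₂ S _ (Finset.filter_subset _ _)
    have hle : (∏ q ∈ S₂, q) ≤ N := Nat.le_of_dvd hN0 hdvd
    have hge : (p+1) ^ S₂.card ≤ ∏ q ∈ S₂, q := by
      rw [← Finset.prod_const]
      apply Finset.prod_le_prod'
      intro q hq
      have := (Finset.mem_filter.mp hq).2
      omega
    have hlt : (p+1) ^ S₂.card < (p+1) ^ n := by
      calc (p+1) ^ S₂.card ≤ N := hge.trans hle
        _ < p ^ n := by omega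
        _ ≤ (p+1) ^ n := Nat.pow_le_pow_left (by omega) n
    have := (Nat.pow_lt_pow_iff_right (by omega : 1 < p + 1)).mp hlt
    omega
  have bound2 : c ^ n ≤ ∏ q ∈ S₂, (1 - 1/(q:ℝ)) := by
    have step1 : c ^ n ≤ c ^ S₂.card := pow_le_pow_of_le_one hc0 hc1 hcard
    have step2 : c ^ S₂.card ≤ ∏ q ∈ S₂, (1 - 1/(q:ℝ)) := by
      rw [← Finset.prod_const]
      apply Finset.prod_le_prod (fun q _ => hc0)
      intro q hq
      obtain ⟨hqS, hpq⟩ := Finset.mem_filter.mp hq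
      obtain ⟨hqprime, hqdvd, -⟩ := hmemS q hqS
      have hqge : 2 * n + 1 ≤ q := aux_large_prime p n q hp hn hnodd hqprime hqdvd hpq
      have hqgeR : 2 * (n:ℝ) + 1 ≤ (q:ℝ) := by exact_mod_cast hqge
      have : 1 / (q:ℝ) ≤ 1 / (2 * (n:ℝ) + 1) :=
        one_div_le_one_div_of_le hn0 hqgeR
      rw [hc]; linarith
    exact step1.trans step2
  have hprodS2nonneg : (0:ℝ) ≤ ∏ q ∈ S₂, (1 - 1/(q:ℝ)) :=
    Finset.prod_nonneg (fun q hq => hfac q (hmemS q (Finset.mem_filter.mp hq).1).1)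
  have hPnonneg : (0:ℝ) ≤ ∏ l ∈ (Finset.range p).filter Nat.Prime, (1 - 1 / (l : ℝ)) :=
    Finset.prod_nonneg (fun l hl => hfac l (Finset.mem_filter.mp hl).2)
  rw [ge_iff_le, key, hsplit]
  calc c ^ n * ∏ l ∈ (Finset.range p).filter Nat.Prime, (1 - 1 / (l : ℝ))
      ≤ (∏ q ∈ S₂, (1 - 1/(q:ℝ))) * ∏ q ∈ S₁, (1 - 1/(q:ℝ)) :=
        mul_le_mul bound2 bound1 hPnonneg hprodS2nonneg
    _ = (∏ q ∈ S₁, (1 - 1/(q:ℝ))) * ∏ q ∈ S₂, (1 - 1/(q:ℝ)) := mul_comm _ _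
end
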